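/- arXiv:0904.1036 — 3 statements merged into one kernel-verified Lean document; each statement's English description precedes it below -/
import Mathlib

section
/- Under hypothesis (H3), any weak* accumulation point ν of the sequence (ν_n) satisfies ν(A) = ν(sat(A)) for every Borel set A ⊆ X, where sat(A) := h⁻¹(h(A)) is the saturation of A. -/
open MeasureTheory Filter Topology Set
open scoped ENNReal NNReal

namespace Samva

variable {X : Type*}

/-- The `n`-th iterate (`n : ℤ`) of a homeomorphism. -/
noncomputable def zIter [TopologicalSpace X] (f : X ≃ₜ X) : ℤ → X → X
  | Int.ofNat n => (f : X → X)^[n]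
  | Int.negSucc n => (f.symm : X → X)^[n + 1]

/-- `f` is expansive with expansivity constant `α`. -/
def IsExpansiveWith [PseudoMetricSpace X] (f : X ≃ₜ X) (α : ℝ) : Prop :=
  0 < α ∧ ∀ x y : X, (∀ n : ℤ, dist (zIter f n x) (zIter f n y) ≤ α) → x = y

/-- `f` is expansive. -/
def IsExpansive [PseudoMetricSpace X] (f : X ≃ₜ X) : Prop :=
  ∃ α : ℝ, IsExpansiveWith f α

/-- The (periodic) specification property. -/
def HasSpecification [PseudoMetricSpace X] (f : X ≃ₜ X) : Prop :=
  ∀ ε : ℝ, 0 < ε → ∃ M : ℕ, ∀ (k : ℕ) (x : Fin (k + 1) → X) (a b : Fin (k + 1) → ℤ),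
    (∀ i, a i ≤ b i) →
    (∀ i : Fin k, (M : ℤ) ≤ a i.succ - b i.castSucc) →
    ∀ p : ℤ, (M : ℤ) + b (Fin.last k) - a 0 ≤ p →
      ∃ z : X, zIter f p z = z ∧
        ∀ i, ∀ j : ℤ, a i ≤ j → j ≤ b i → dist (zIter f j z) (zIter f j (x i)) ≤ ε

/-- The set of `n`-periodic points. -/
def perSet (f : X → X) (n : ℕ) : Set X := {x | f^[n] x = x}

/-- The uniform (equidistributed) probability measure on the `n`-periodic points of `f`,
`μ_n = |Per_n(f)|⁻¹ ∑_{x ∈ Per_n(f)} δ_x`. -/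
noncomputable def perMeasure [MeasurableSpace X] (f : X → X) (n : ℕ) : Measure X :=
  ProbabilityTheory.uniformOn (perSet f n)

/-- The uniform probability measure on a set `s`,
`|s|⁻¹ ∑_{x ∈ s} δ_x`. -/
noncomputable def unifMeasure [MeasurableSpace X] (s : Set X) : Measure X :=
  ProbabilityTheory.uniformOn s

/-- Weak* convergence of a sequence of measures against continuous test functions. -/
def WeakLimit [TopologicalSpace X] [MeasurableSpace X] (μs : ℕ → Measure X) (ν : Measure X) :
    Prop :=
  ∀ φ : C(X, ℝ), Tendsto (fun n => ∫ x, φ x ∂(μs n)) atTop (𝓝 (∫ x, φ x ∂ν))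

/-- `ν` is a weak* accumulation point of the sequence `μs`. -/
def WeakClusterPt [TopologicalSpace X] [MeasurableSpace X] (μs : ℕ → Measure X)
    (ν : Measure X) : Prop :=
  ∃ u : ℕ → ℕ, StrictMono u ∧ WeakLimit (μs ∘ u) ν

/-- `E` is `(n,ε)`-separated for `g`. -/
def IsSep [PseudoMetricSpace X] (g : X → X) (n : ℕ) (ε : ℝ) (E : Set X) : Prop :=
  E.Pairwise fun x y => ∃ j < n, ε < dist (g^[j] x) (g^[j] y)

/-- Maximal cardinality of an `(n,ε)`-separated subset of `K` for `g`. -/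
noncomputable def sepCard [PseudoMetricSpace X] (g : X → X) (K : Set X) (n : ℕ) (ε : ℝ) :
    ℝ≥0∞ :=
  ⨆ (E : Finset X) (_ : ↑E ⊆ K ∧ IsSep g n ε ↑E), (E.card : ℝ≥0∞)

/-- Topological entropy of `g` relative to the set `K`:
`h_top(g,K) = lim_{ε→0} limsup_n (1/n) log E_K(n,ε)`; since the inner quantity is
monotone in `ε`, the limit as `ε → 0` is the supremum over `ε > 0`. -/
noncomputable def relEntropy [PseudoMetricSpace X] (g : X → X) (K : Set X) : EReal :=
  ⨆ (ε : ℝ) (_ : 0 < ε),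
    Filter.limsup (fun n : ℕ => ENNReal.log (sepCard g K n ε) / (n : EReal)) atTop

/-- Topological entropy of `g`. -/
noncomputable def topEntropy [PseudoMetricSpace X] (g : X → X) : EReal :=
  relEntropy g Set.univ

/-- A finite measurable partition of `X`. -/
def IsMPartition [MeasurableSpace X] (P : Finset (Set X)) : Prop :=
  (∀ A ∈ P, MeasurableSet A) ∧ ((P : Set (Set X)).PairwiseDisjoint id) ∧
    ⋃₀ (P : Set (Set X)) = Set.univ

/-- The entropy `H_μ(P ∨ g⁻¹P ∨ ⋯ ∨ g^{-(n-1)}P)` of the `n`-th dynamical refinement of the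
partition `P`. -/
noncomputable def dynH [MeasurableSpace X] (μ : Measure X) (g : X → X) (P : Finset (Set X))
    (n : ℕ) : ℝ :=
  ∑ A : Fin n → ↥P, Real.negMulLog (μ (⋂ i : Fin n, g^[i.1] ⁻¹' ((A i : Set X)))).toReal

/-- The measure-theoretic (Kolmogorov–Sinai) entropy `h_μ(g)`, using that for invariant `μ`
the limit `lim_n H_n/n` equals `inf_n H_n/n` by subadditivity. -/
noncomputable def mEntropy [MeasurableSpace X] (g : X → X) (μ : Measure X) : EReal :=
  ⨆ P : {P : Finset (Set X) // IsMPartition P},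
    ⨅ n : ℕ, ((dynH μ g (P : Finset (Set X)) (n + 1) / (n + 1) : ℝ) : EReal)

section Hyp

variable [MetricSpace X] [CompactSpace X] [MeasurableSpace X] [BorelSpace X]

/-- Hypothesis (H1): every class `[x] = h⁻¹(h x)` has zero relative topological entropy. -/
def HypH1 (g h : X → X) : Prop :=
  ∀ x : X, relEntropy g (h ⁻¹' {h x}) = 0

/-- Hypothesis (H2): every periodic class contains a `g`-periodic point whose `g`-period is
the `f`-period of `h x`. -/
def HypH2 (f g h : X → X) : Prop :=
  ∀ x : X, h x ∈ Function.periodicPts f →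
    ∃ y : X, h y = h x ∧ Function.minimalPeriod g y = Function.minimalPeriod f (h x)

/-- Hypothesis (H3): the set of points whose class is trivial has full Bowen measure. -/
def HypH3 (h : X → X) (μ : Measure X) : Prop :=
  μ {y : X | ∃ x : X, h ⁻¹' {y} = {x}} = 1

/-- `P` is an admissible choice of the sets `P̃er_n(g)`: `P n` consists of `g`-periodic points
of period `n` lying over `Per_n(f)`, and `h` maps `P n` bijectively onto `Per_n(f)`. -/
def IsPerSelection (f g h : X → X) (P : ℕ → Set X) : Prop :=
  ∀ n : ℕ, P n ⊆ perSet g n ∧ (∀ x ∈ P n, g x ∈ P n) ∧ Set.BijOn h (P n) (perSet f n)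

end Hyp

end Samva

open Samva

section Aux

variable {X : Type*}

private lemma zIter_eq' [TopologicalSpace X] (f : X ≃ₜ X) (m : ℤ) :
    zIter f m = ⇑(f.toEquiv ^ m) := by
  cases m with
  | ofNat n =>
    show (⇑f)^[n] = _
    rw [Int.ofNat_eq_coe, zpow_natCast, Equiv.Perm.coe_pow]
    rfl
  | negSucc n =>
    show (⇑f.symm)^[n+1] = _
    rw [zpow_negSucc, ← inv_pow, Equiv.Perm.coe_pow]
    rfl

private lemma dist_zIter_le' [MetricSpace X] (f : X ≃ₜ X) {n : ℕ} (hn : 0 < n) {x y : X}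
    (hx : (⇑f)^[n] x = x) (hy : (⇑f)^[n] y = y) {α : ℝ}
    (hd : ∀ j < n, dist ((⇑f)^[j] x) ((⇑f)^[j] y) ≤ α) :
    ∀ m : ℤ, dist (zIter f m x) (zIter f m y) ≤ α := by
  intro m
  set e := f.toEquiv with he
  have key : ∀ z : X, (⇑f)^[n] z = z → zIter f m z = (⇑f)^[(m % (n:ℤ)).toNat] z := by
    intro z hz
    have hz' : Function.IsFixedPt ⇑(e ^ ((n:ℤ) * (m / (n:ℤ)))) z := by
      rw [zpow_mul]
      exact Function.IsFixedPt.perm_zpow (by rwa [zpow_natCast]) _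
    have hm : (m % (n:ℤ)) + (n:ℤ) * (m / (n:ℤ)) = m := Int.emod_add_mul_ediv m n
    calc zIter f m z = ⇑(e ^ m) z := by rw [zIter_eq']
      _ = ⇑(e ^ ((m % (n:ℤ)) + (n:ℤ) * (m / (n:ℤ)))) z := by rw [hm]
      _ = ⇑(e ^ (m % (n:ℤ))) (⇑(e ^ ((n:ℤ) * (m / (n:ℤ)))) z) := by
          rw [zpow_add]; rfl
      _ = ⇑(e ^ (m % (n:ℤ))) z := by rw [hz']
      _ = (⇑f)^[(m % (n:ℤ)).toNat] z := by
          rw [← Int.toNat_of_nonneg (Int.emod_nonneg m (by exact_mod_cast hn.ne' : (n:ℤ) ≠ 0)),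
            zpow_natCast, Equiv.Perm.coe_pow]
          rfl
  rw [key x hx, key y hy]
  apply hd
  have : (m % (n:ℤ)) < n := Int.emod_lt_of_pos m (by exact_mod_cast hn)
  omega

private lemma perSet_finite' [MetricSpace X] [CompactSpace X] (f : X ≃ₜ X)
    (hexp : IsExpansive f) {n : ℕ} (hn : 0 < n) : (perSet (⇑f) n).Finite := by
  obtain ⟨α, hα, hsep⟩ := hexp
  have hF : UniformContinuous (fun x : X => fun j : Fin n => (⇑f)^[j.1] x) :=
    CompactSpace.uniformContinuous_of_continuous
      (continuous_pi fun j => f.continuous.iterate j.1)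
  obtain ⟨δ, hδ, hδ'⟩ := Metric.uniformContinuous_iff.mp hF α hα
  have hclose : ∀ x ∈ perSet (⇑f) n, ∀ y ∈ perSet (⇑f) n, dist x y < δ → x = y := by
    intro x hx y hy hxy
    refine hsep x y (dist_zIter_le' f hn hx hy ?_)
    intro j hj
    exact ((dist_pi_lt_iff hα).mp (hδ' hxy) ⟨j, hj⟩).le
  by_contra hinf
  rw [← Set.not_infinite, not_not] at hinf
  obtain ⟨t, htf, htc⟩ := (Metric.totallyBounded_iff.mp
    ((isCompact_univ : IsCompact (Set.univ : Set X)).totallyBounded)) (δ/2) (by linarith)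
  have hcov : perSet (⇑f) n ⊆ ⋃ y ∈ t, (perSet (⇑f) n ∩ Metric.ball y (δ/2)) := by
    intro x hx
    obtain ⟨s, hs1, hs2⟩ := Set.mem_iUnion₂.mp (htc (Set.mem_univ x))
    exact Set.mem_iUnion₂.mpr ⟨s, hs1, hx, hs2⟩
  have : ∃ y ∈ t, (perSet (⇑f) n ∩ Metric.ball y (δ/2)).Infinite := by
    by_contra hfin
    push_neg at hfin
    exact hinf ((htf.biUnion hfin).subset hcov)
  obtain ⟨y, -, hy⟩ := this
  obtain ⟨a, ha, b, hb, hab⟩ := hy.nontrivial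
  refine hab (hclose a ha.1 b hb.1 ?_)
  have h1 : dist a y < δ/2 := Metric.mem_ball.mp ha.2
  have h2 : dist b y < δ/2 := Metric.mem_ball.mp hb.2
  calc dist a b ≤ dist a y + dist y b := dist_triangle a y b
    _ < δ/2 + δ/2 := by rw [dist_comm y b]; linarith
    _ = δ := by ring

private lemma perSet_nonempty' [MetricSpace X] [Nonempty X] (f : X ≃ₜ X)
    (hspec : HasSpecification f) :
    ∃ M : ℕ, ∀ n : ℕ, M ≤ n → (perSet (⇑f) n).Nonempty := by
  obtain ⟨M, hM⟩ := hspec 1 one_pos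
  refine ⟨M, fun n hn => ?_⟩
  obtain ⟨z, hz, -⟩ := hM 0 (fun _ => Classical.arbitrary X) (fun _ => 0) (fun _ => 0)
    (fun _ => le_rfl) (fun i => i.elim0) (n : ℤ) (by simp; exact_mod_cast hn)
  refine ⟨z, ?_⟩
  rw [zIter_eq', zpow_natCast, Equiv.Perm.coe_pow] at hz
  exact hz

private lemma map_uniformOn' [MeasurableSpace X] [MeasurableSingletonClass X] {h : X → X}
    (hm : Measurable h) {s : Set X} (hs : s.Finite) (hinj : Set.InjOn h s) :
    Measure.map h (ProbabilityTheory.uniformOn s) = ProbabilityTheory.uniformOn (h '' s) := by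
  have hcount : ∀ t : Set X, t ⊆ s → Measure.count (h '' t) = Measure.count t := by
    intro t hts
    have htf := hs.subset hts
    rw [Measure.count_apply_finite _ (htf.image h), Measure.count_apply_finite _ htf]
    norm_cast
    rw [← Set.ncard_eq_toFinset_card _ (htf.image h), ← Set.ncard_eq_toFinset_card _ htf,
      Set.ncard_image_of_injOn (hinj.mono hts)]
  ext B hB
  rw [Measure.map_apply hm hB, ProbabilityTheory.uniformOn, ProbabilityTheory.uniformOn,
    ProbabilityTheory.cond_apply hs.measurableSet,
    ProbabilityTheory.cond_apply (hs.image h).measurableSet,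
    ← Set.image_inter_preimage h s B, hcount s Set.Subset.rfl,
    hcount _ Set.inter_subset_left]

private lemma ext_integral' [MetricSpace X] [CompactSpace X] [MeasurableSpace X] [BorelSpace X]
    {μ₁ μ₂ : Measure X} [IsFiniteMeasure μ₁] [IsFiniteMeasure μ₂]
    (hint : ∀ φ : C(X, ℝ), ∫ x, φ x ∂μ₁ = ∫ x, φ x ∂μ₂) : μ₁ = μ₂ := by
  apply MeasureTheory.ext_of_forall_lintegral_eq_of_IsFiniteMeasure
  intro f
  have h1 := f.lintegral_lt_top_of_nnreal (μ := μ₁)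
  have h2 := f.lintegral_lt_top_of_nnreal (μ := μ₂)
  have hφ := hint ⟨fun x => ((f x : ℝ≥0) : ℝ), NNReal.continuous_coe.comp f.continuous⟩
  have e1 := f.toReal_lintegral_coe_eq_integral μ₁
  have e2 := f.toReal_lintegral_coe_eq_integral μ₂
  refine (ENNReal.toReal_eq_toReal_iff' h1.ne h2.ne).mp ?_
  rw [e1, e2]
  exact hφ

end Aux
/-- Under (H3), any weak* accumulation point `ν` of `(ν_n)` gives the same measure to every
Borel set `A` and to its saturation `sat(A) = h⁻¹(h(A))`. -/
theorem measure_of_saturation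
    {X : Type*} [MetricSpace X] [CompactSpace X] [MeasurableSpace X] [BorelSpace X]
    (f g : X ≃ₜ X) (h : X → X) (hcont : Continuous h) (hsurj : Function.Surjective h)
    (hsemi : ∀ x : X, f (h x) = h (g x))
    (hexp : IsExpansive f) (hspec : HasSpecification f)
    (μ : Measure X) (hμprob : IsProbabilityMeasure μ)
    (hμ : WeakLimit (perMeasure (⇑f)) μ)
    (H2 : HypH2 (⇑f) (⇑g) h) (H3 : HypH3 h μ)
    (P : ℕ → Set X) (hP : IsPerSelection (⇑f) (⇑g) h P)
 :
    ∀ ν : Measure X, WeakClusterPt (fun n => unifMeasure (P n)) ν →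
      ∀ A : Set X, MeasurableSet A → ν A = ν (h ⁻¹' (h '' A)) := by
  classical
  rintro ν ⟨u, hu, hlim⟩ A hA
  cases isEmpty_or_nonempty X with
  | inl hempty =>
    rw [Set.eq_empty_of_isEmpty A, Set.eq_empty_of_isEmpty (h ⁻¹' (h '' ∅))]
  | inr hne =>
  obtain ⟨M₀, hM₀⟩ := perSet_nonempty' f hspec
  set N := M₀ + 1 with hN
  have hmeas : Measurable h := hcont.measurable
  have hPfin : ∀ m, N ≤ m → (P m).Finite := by
    intro m hm'
    refine Set.Finite.of_finite_image ?_ (hP m).2.2.injOn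
    rw [(hP m).2.2.image_eq]
    exact perSet_finite' f hexp (by omega)
  have hPne : ∀ m, N ≤ m → (P m).Nonempty := by
    intro m hm'
    obtain ⟨y, hy⟩ := hM₀ m (by omega)
    obtain ⟨x, hx, -⟩ := (hP m).2.2.surjOn hy
    exact ⟨x, hx⟩
  have hmap : ∀ m, N ≤ m → Measure.map h (unifMeasure (P m)) = perMeasure (⇑f) m := by
    intro m hm'
    rw [unifMeasure, perMeasure, map_uniformOn' hmeas (hPfin m hm') (hP m).2.2.injOn,
      (hP m).2.2.image_eq]
  -- ν is a probability measure
  have hν1 : ν Set.univ = 1 := by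
    have hψ := hlim (ContinuousMap.const X (1 : ℝ))
    have hev : (fun k => ∫ x, (ContinuousMap.const X (1:ℝ)) x
        ∂(((fun n => unifMeasure (P n)) ∘ u) k)) =ᶠ[atTop] (fun _ => (1:ℝ)) := by
      filter_upwards [eventually_ge_atTop N] with k hk
      have huk : N ≤ u k := le_trans hk hu.le_apply
      have : IsProbabilityMeasure (unifMeasure (P (u k))) :=
        ProbabilityTheory.uniformOn_isProbabilityMeasure (hPfin _ huk) (hPne _ huk)
      simp only [ContinuousMap.const_apply, integral_const, smul_eq_mul, mul_one,
        Function.comp_apply, unifMeasure] at this ⊢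
      rw [measureReal_def, this.measure_univ]
      simp
    have h1 : (∫ x, (ContinuousMap.const X (1:ℝ)) x ∂ν) = 1 :=
      tendsto_nhds_unique (hψ.congr' hev) tendsto_const_nhds
    simp only [ContinuousMap.const_apply, integral_const, smul_eq_mul, mul_one, measureReal_def] at h1
    rcases eq_top_or_lt_top (ν Set.univ) with htop | hlt
    · rw [htop] at h1; simp at h1
    · rw [← ENNReal.ofReal_toReal hlt.ne, h1]; simp
  have hνprob : IsProbabilityMeasure ν := ⟨hν1⟩
  have hfinmap : IsFiniteMeasure (Measure.map h ν) := by
    constructor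
    rw [Measure.map_apply hmeas MeasurableSet.univ]
    simp [hν1]
  -- map h ν = μ
  have key : ∀ φ : C(X, ℝ), ∫ x, φ x ∂(Measure.map h ν) = ∫ x, φ x ∂μ := by
    intro φ
    rw [integral_map hmeas.aemeasurable φ.continuous.aestronglyMeasurable]
    have hψ := hlim (φ.comp ⟨h, hcont⟩)
    have hev : (fun k => ∫ x, (φ.comp ⟨h, hcont⟩) x ∂(((fun n => unifMeasure (P n)) ∘ u) k))
        =ᶠ[atTop] (fun k => ∫ x, φ x ∂(perMeasure (⇑f) (u k))) := by
      filter_upwards [eventually_ge_atTop N] with k hk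
      have huk : N ≤ u k := le_trans hk hu.le_apply
      show ∫ x, φ (h x) ∂(unifMeasure (P (u k))) = _
      rw [← hmap (u k) huk, integral_map hmeas.aemeasurable φ.continuous.aestronglyMeasurable]
    have hμ' : Tendsto (fun k => ∫ x, φ x ∂(perMeasure (⇑f) (u k))) atTop
        (𝓝 (∫ x, φ x ∂μ)) := (hμ φ).comp hu.tendsto_atTop
    exact tendsto_nhds_unique (hψ.congr' hev) hμ'
  have hmapeq : Measure.map h ν = μ := ext_integral' key
  -- the set of points with nontrivial class
  set Nt : Set X := ⋃ k : ℕ, (fun p : X × X => h p.1) ''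
    {p : X × X | h p.1 = h p.2 ∧ 1/((k:ℝ)+1) ≤ dist p.1 p.2} with hNtdef
  have hNtmeas : MeasurableSet Nt := by
    refine MeasurableSet.iUnion fun k => ?_
    refine (IsCompact.image ?_ (hcont.comp continuous_fst)).measurableSet
    refine IsClosed.isCompact ?_
    exact (isClosed_eq (hcont.comp continuous_fst) (hcont.comp continuous_snd)).inter
      (isClosed_le continuous_const (continuous_fst.dist continuous_snd))
  have hNt : {y : X | ∃ x : X, h ⁻¹' {y} = {x}} = Ntᶜ := by
    ext y
    simp only [Set.mem_setOf_eq, Set.mem_compl_iff, hNtdef, Set.mem_iUnion, Set.mem_image]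
    constructor
    · rintro ⟨x, hx⟩ ⟨k, p, ⟨hp1, hp2⟩, hpy⟩
      have e1 : p.1 ∈ h ⁻¹' {y} := by simp [hpy]
      have e2 : p.2 ∈ h ⁻¹' {y} := by simp [Set.mem_preimage, ← hp1, hpy]
      rw [hx, Set.mem_singleton_iff] at e1 e2
      have h0 : dist p.1 p.2 = 0 := by rw [e1, e2, dist_self]
      have hk : (0:ℝ) < 1/((k:ℝ)+1) := by positivity
      linarith
    · intro hy
      obtain ⟨x, hxy⟩ := hsurj y
      refine ⟨x, ?_⟩
      ext z
      simp only [Set.mem_preimage, Set.mem_singleton_iff]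
      constructor
      · intro hz
        by_contra hne
        obtain ⟨k, hk⟩ := exists_nat_one_div_lt (dist_pos.mpr hne : 0 < dist z x)
        exact hy ⟨k, (z, x), ⟨by rw [hz, hxy], hk.le⟩, hz⟩
      · rintro rfl; exact hxy
  have hμNt : μ Nt = 0 := by
    have h1 : μ Ntᶜ = 1 := by rw [← hNt]; exact H3
    have h2 := measure_add_measure_compl hNtmeas (μ := μ)
    rw [h1, measure_univ] at h2
    have h3 : μ Nt + 1 = 0 + 1 := by rw [zero_add]; exact h2
    exact WithTop.add_right_cancel ENNReal.one_ne_top h3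
  have hνNt : ν (h ⁻¹' Nt) = 0 := by
    rw [← Measure.map_apply hmeas hNtmeas, hmapeq]; exact hμNt
  refine le_antisymm (measure_mono (Set.subset_preimage_image h A)) ?_
  have hsub : h ⁻¹' (h '' A) ⊆ A ∪ h ⁻¹' Nt := by
    intro x hx
    obtain ⟨a, haA, hax⟩ := hx
    by_cases hxA : x ∈ A
    · exact Or.inl hxA
    · refine Or.inr ?_
      have hne : a ≠ x := fun e => hxA (e ▸ haA)
      obtain ⟨k, hk⟩ := exists_nat_one_div_lt (dist_pos.mpr hne : 0 < dist a x)
      exact Set.mem_iUnion.mpr ⟨k, (a, x), ⟨hax, hk.le⟩, hax⟩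
  calc ν (h ⁻¹' (h '' A)) ≤ ν (A ∪ h ⁻¹' Nt) := measure_mono hsub
    _ ≤ ν A + ν (h ⁻¹' Nt) := measure_union_le _ _
    _ = ν A := by rw [hνNt, add_zero]
end

section
/- Every r-pseudo orbit (x_n)_{n∈ℤ} for A is r/(1−a)-shadowed by a unique true orbit: there exists a unique point y ∈ ℝ^N such that ‖A^n y − x_n‖ ≤ r/(1−a) for all n ∈ ℤ. -/
open MeasureTheory Filter Topology Set
open scoped ENNReal NNReal

open Samva

/-- Every `r`-pseudo orbit for a hyperbolic linear isomorphism `A` is `r/(1-a)`-shadowed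
by a unique true orbit. -/
theorem shadowing_lemma
    {V : Type*} [NormedAddCommGroup V] [NormedSpace ℝ V] [FiniteDimensional ℝ V]
    (A : V ≃L[ℝ] V) (Ps Pu : V →L[ℝ] V) (a : ℝ) (ha0 : 0 < a) (ha1 : a < 1)
    (hPs : ∀ x : V, Ps (Ps x) = Ps x) (hPu : ∀ x : V, Pu (Pu x) = Pu x)
    (hsum : ∀ x : V, Ps x + Pu x = x)
    (hAPs : ∀ x : V, A (Ps x) = Ps (A x)) (hAPu : ∀ x : V, A (Pu x) = Pu (A x))
    (hnorm : ∀ x : V, ‖x‖ = max ‖Ps x‖ ‖Pu x‖)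
    (hcontr : ∀ x : V, ‖A (Ps x)‖ ≤ a * ‖Ps x‖)
    (hexpd : ∀ x : V, ‖A.symm (Pu x)‖ ≤ a * ‖Pu x‖)
    (r : ℝ) (hr : 0 < r) (x : ℤ → V) (hx : ∀ n : ℤ, ‖A (x n) - x (n + 1)‖ ≤ r) :
    ∃! y : V, ∀ n : ℤ, ‖(A ^ n) y - x n‖ ≤ r / (1 - a) := by
  have haa : (0:ℝ) ≤ a := ha0.le
  have h1a : (0:ℝ) < 1 - a := by linarith
  set C : ℝ := r / (1 - a) with hCdef
  have hC : 0 < C := div_pos hr h1a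
  -- zpow application facts
  have happ : ∀ (m n : ℤ) (v : V), (A ^ (m + n)) v = (A ^ m) ((A ^ n) v) := by
    intro m n v; rw [zpow_add]; rfl
  have hzero : ∀ v : V, (A ^ (0:ℤ)) v = v := by
    intro v; rw [zpow_zero]; rfl
  have h1 : ∀ (n : ℤ) (v : V), (A ^ (n + 1)) v = A ((A ^ n) v) := by
    intro n v; rw [add_comm, zpow_add, zpow_one]; rfl
  have h2 : ∀ (n : ℤ) (v : V), (A ^ (n - 1)) v = A.symm ((A ^ n) v) := by
    intro n v
    have h := h1 (n - 1) v
    rw [sub_add_cancel] at h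
    rw [h, A.symm_apply_apply]
  have hsymmPu : ∀ v : V, A.symm (Pu v) = Pu (A.symm v) := by
    intro v
    have h := hAPu (A.symm v)
    rw [A.apply_symm_apply] at h
    rw [← h, A.symm_apply_apply]
  have hPsPu : ∀ v : V, Ps (Pu v) = 0 := by
    intro v
    have h := hsum (Pu v)
    rw [hPu] at h
    exact add_eq_right.mp h
  have hPuPs : ∀ v : V, Pu (Ps v) = 0 := by
    intro v
    have h := hsum (Ps v)
    rw [hPs] at h
    exact add_eq_left.mp h
  have hPsle : ∀ v : V, ‖Ps v‖ ≤ ‖v‖ := fun v => (hnorm v) ▸ le_max_left _ _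
  have hPule : ∀ v : V, ‖Pu v‖ ≤ ‖v‖ := fun v => (hnorm v) ▸ le_max_right _ _
  -- commutation of powers with projections
  have hsc : ∀ (k : ℕ) (v : V), (A ^ (k:ℤ)) (Ps v) = Ps ((A ^ (k:ℤ)) v) := by
    intro k
    induction k with
    | zero => intro v; simp only [Nat.cast_zero]; rw [hzero, hzero]
    | succ k ih =>
      intro v
      push_cast
      rw [h1, h1, ih, hAPs]
  have huc : ∀ (k : ℕ) (v : V), (A ^ (-(k:ℤ))) (Pu v) = Pu ((A ^ (-(k:ℤ))) v) := by
    intro k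
    induction k with
    | zero => intro v; simp only [Nat.cast_zero, neg_zero]; rw [hzero, hzero]
    | succ k ih =>
      intro v
      have hc : (-(((k:ℕ)+1:ℕ):ℤ)) = -(k:ℤ) - 1 := by push_cast; ring
      rw [hc, h2, h2, ih, hsymmPu]
  -- contraction estimates
  have hsn : ∀ (k : ℕ) (v : V), ‖(A ^ (k:ℤ)) (Ps v)‖ ≤ a ^ k * ‖Ps v‖ := by
    intro k
    induction k with
    | zero => intro v; simp only [Nat.cast_zero, pow_zero, one_mul]; rw [hzero]
    | succ k ih =>
      intro v
      have hc : (((k:ℕ)+1:ℕ):ℤ) = (k:ℤ) + 1 := by push_cast; ring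
      calc ‖(A ^ (((k:ℕ)+1:ℕ):ℤ)) (Ps v)‖ = ‖A ((A ^ (k:ℤ)) (Ps v))‖ := by rw [hc, h1]
        _ = ‖A (Ps ((A ^ (k:ℤ)) v))‖ := by rw [hsc]
        _ ≤ a * ‖Ps ((A ^ (k:ℤ)) v)‖ := hcontr _
        _ = a * ‖(A ^ (k:ℤ)) (Ps v)‖ := by rw [hsc]
        _ ≤ a * (a ^ k * ‖Ps v‖) := mul_le_mul_of_nonneg_left (ih v) haa
        _ = a ^ (k+1) * ‖Ps v‖ := by ring
  have hun : ∀ (k : ℕ) (v : V), ‖(A ^ (-(k:ℤ))) (Pu v)‖ ≤ a ^ k * ‖Pu v‖ := by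
    intro k
    induction k with
    | zero => intro v; simp only [Nat.cast_zero, neg_zero, pow_zero, one_mul]; rw [hzero]
    | succ k ih =>
      intro v
      have hc : (-(((k:ℕ)+1:ℕ):ℤ)) = -(k:ℤ) - 1 := by push_cast; ring
      calc ‖(A ^ (-(((k:ℕ)+1:ℕ)):ℤ)) (Pu v)‖ = ‖A.symm ((A ^ (-(k:ℤ))) (Pu v))‖ := by
            rw [hc, h2]
        _ = ‖A.symm (Pu ((A ^ (-(k:ℤ))) v))‖ := by rw [huc]
        _ ≤ a * ‖Pu ((A ^ (-(k:ℤ))) v)‖ := hexpd _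
        _ = a * ‖(A ^ (-(k:ℤ))) (Pu v)‖ := by rw [huc]
        _ ≤ a * (a ^ k * ‖Pu v‖) := mul_le_mul_of_nonneg_left (ih v) haa
        _ = a ^ (k+1) * ‖Pu v‖ := by ring
  -- the error sequence
  set e : ℤ → V := fun n => A (x n) - x (n + 1) with he
  have heb : ∀ n : ℤ, ‖e n‖ ≤ r := hx
  have hePs : ∀ (k : ℕ) (n : ℤ), ‖(A ^ (k:ℤ)) (Ps (e n))‖ ≤ a ^ k * r := by
    intro k n
    calc ‖(A ^ (k:ℤ)) (Ps (e n))‖ ≤ a ^ k * ‖Ps (e n)‖ := hsn k _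
      _ ≤ a ^ k * r :=
        mul_le_mul_of_nonneg_left ((hPsle _).trans (heb n)) (pow_nonneg haa k)
  have hePu : ∀ (k : ℕ) (n : ℤ), ‖(A ^ (-(k:ℤ)-1)) (Pu (e n))‖ ≤ a ^ k * r := by
    intro k n
    have hc : (-(k:ℤ)-1) = -(((k:ℕ)+1:ℕ):ℤ) := by push_cast; ring
    have hb : ‖Pu (e n)‖ ≤ r := (hPule _).trans (heb n)
    have hle : a ^ (k+1) ≤ a ^ k := pow_le_pow_of_le_one haa ha1.le (Nat.le_succ k)
    calc ‖(A ^ (-(k:ℤ)-1)) (Pu (e n))‖ = ‖(A ^ (-(((k:ℕ)+1:ℕ)):ℤ)) (Pu (e n))‖ := by rw [hc]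
      _ ≤ a ^ (k+1) * ‖Pu (e n)‖ := hun (k+1) _
      _ ≤ a ^ k * r := by nlinarith [pow_nonneg haa k, pow_nonneg haa (k+1), norm_nonneg (Pu (e n))]
  -- geometric series
  have hgeom : Summable (fun k : ℕ => a ^ k * r) :=
    (summable_geometric_of_lt_one haa ha1).mul_right r
  have hgeomsum : ∑' k : ℕ, a ^ k * r = C := by
    rw [tsum_mul_right, tsum_geometric_of_lt_one haa ha1, hCdef, div_eq_inv_mul]
  -- the shadowing series
  have hSs : ∀ n : ℤ, Summable (fun k : ℕ => (A ^ (k:ℤ)) (Ps (e (n - 1 - k)))) := fun n =>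
    Summable.of_norm_bounded hgeom (fun k => hePs k _)
  have hSu : ∀ n : ℤ, Summable (fun k : ℕ => (A ^ (-(k:ℤ)-1)) (Pu (e (n + k)))) := fun n =>
    Summable.of_norm_bounded hgeom (fun k => hePu k _)
  set zs : ℤ → V := fun n => ∑' k : ℕ, (A ^ (k:ℤ)) (Ps (e (n - 1 - k))) with hzs
  set zu : ℤ → V := fun n => ∑' k : ℕ, (A ^ (-(k:ℤ)-1)) (Pu (e (n + k))) with hzu
  set z : ℤ → V := fun n => zs n - zu n with hz
  -- norm bounds on the series
  have hbound : ∀ (f : ℕ → V), (∀ k, ‖f k‖ ≤ a ^ k * r) → ‖∑' k, f k‖ ≤ C := by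
    intro f hf
    have hfs : Summable f := Summable.of_norm_bounded hgeom hf
    have hns : Summable fun k => ‖f k‖ := hfs.norm
    calc ‖∑' k, f k‖ ≤ ∑' k, ‖f k‖ := norm_tsum_le_tsum_norm hns
      _ ≤ ∑' k, a ^ k * r := Summable.tsum_le_tsum hf hns hgeom
      _ = C := hgeomsum
  have hzsb : ∀ n, ‖zs n‖ ≤ C := fun n => hbound _ (fun k => hePs k _)
  have hzub : ∀ n, ‖zu n‖ ≤ C := fun n => hbound _ (fun k => hePu k _)
  -- projections of the series
  have hPzs : ∀ n, Ps (zs n) = zs n := by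
    intro n
    calc Ps (zs n) = ∑' k : ℕ, Ps ((A ^ (k:ℤ)) (Ps (e (n - 1 - k)))) :=
          ((hSs n).hasSum.mapL Ps).tsum_eq.symm
      _ = zs n := by
          apply tsum_congr; intro k
          rw [hsc, hPs, ← hsc]
  have hPzu : ∀ n, Ps (zu n) = 0 := by
    intro n
    calc Ps (zu n) = ∑' k : ℕ, Ps ((A ^ (-(k:ℤ)-1)) (Pu (e (n + k)))) :=
          ((hSu n).hasSum.mapL Ps).tsum_eq.symm
      _ = 0 := by
          rw [← tsum_zero]
          apply tsum_congr; intro k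
          have hc : (-(k:ℤ)-1) = -(((k:ℕ)+1:ℕ):ℤ) := by push_cast; ring
          rw [hc, huc, hPsPu]
  have hPuzs : ∀ n, Pu (zs n) = 0 := by
    intro n
    calc Pu (zs n) = ∑' k : ℕ, Pu ((A ^ (k:ℤ)) (Ps (e (n - 1 - k)))) :=
          ((hSs n).hasSum.mapL Pu).tsum_eq.symm
      _ = 0 := by
          rw [← tsum_zero]
          apply tsum_congr; intro k
          rw [hsc, hPuPs]
  have hPuzu : ∀ n, Pu (zu n) = zu n := by
    intro n
    calc Pu (zu n) = ∑' k : ℕ, Pu ((A ^ (-(k:ℤ)-1)) (Pu (e (n + k)))) :=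
          ((hSu n).hasSum.mapL Pu).tsum_eq.symm
      _ = zu n := by
          apply tsum_congr; intro k
          have hc : (-(k:ℤ)-1) = -(((k:ℕ)+1:ℕ):ℤ) := by push_cast; ring
          rw [hc, huc, hPu, ← huc]
  have hzb : ∀ n, ‖z n‖ ≤ C := by
    intro n
    have hps : Ps (z n) = zs n := by
      rw [hz]; simp only [map_sub]
      rw [hPzs n, hPzu n, sub_zero]
    have hpu : Pu (z n) = -zu n := by
      rw [hz]; simp only [map_sub]
      rw [hPuzs n, hPuzu n, zero_sub]
    rw [hnorm (z n), hps, hpu, norm_neg]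
    exact max_le (hzsb n) (hzub n)
  -- the recurrence z (n+1) = A (z n) + e n
  have hrec : ∀ n : ℤ, z (n + 1) = A (z n) + e n := by
    intro n
    have hAzs : A (zs n) = ∑' k : ℕ, (A ^ ((k:ℤ)+1)) (Ps (e (n - 1 - k))) := by
      calc A (zs n) = ∑' k : ℕ, A ((A ^ (k:ℤ)) (Ps (e (n - 1 - k)))) :=
            ((hSs n).hasSum.mapL (A : V →L[ℝ] V)).tsum_eq.symm
        _ = _ := tsum_congr fun k => (h1 (k:ℤ) _).symm
    have hzs1 : zs (n+1) = Ps (e n) + A (zs n) := by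
      rw [hAzs]
      calc zs (n+1)
          = (A ^ ((0:ℕ):ℤ)) (Ps (e (n+1-1-(0:ℕ)))) +
            ∑' k : ℕ, (A ^ (((k+1:ℕ)):ℤ)) (Ps (e (n+1-1-((k+1:ℕ):ℤ)))) :=
            Summable.tsum_eq_zero_add (hSs (n+1))
        _ = Ps (e n) + ∑' k : ℕ, (A ^ ((k:ℤ)+1)) (Ps (e (n - 1 - k))) := by
            congr 1
            · have : n+1-1-((0:ℕ):ℤ) = n := by push_cast; ring
              rw [this]
              simp only [Nat.cast_zero]
              rw [hzero]
            · apply tsum_congr; intro k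
              have e1 : ((k+1:ℕ):ℤ) = (k:ℤ)+1 := by push_cast; ring
              have e2 : n+1-1-((k:ℤ)+1) = n-1-(k:ℤ) := by ring
              rw [e1, e2]
    have hSu' : Summable (fun k : ℕ => (A ^ (-(k:ℤ))) (Pu (e (n + k)))) := by
      apply Summable.of_norm_bounded hgeom
      intro k
      exact (hun k _).trans
        (mul_le_mul_of_nonneg_left ((hPule _).trans (heb _)) (pow_nonneg haa k))
    have hAzu : A (zu n) = ∑' k : ℕ, (A ^ (-(k:ℤ))) (Pu (e (n + k))) := by
      calc A (zu n) = ∑' k : ℕ, A ((A ^ (-(k:ℤ)-1)) (Pu (e (n + k)))) :=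
            ((hSu n).hasSum.mapL (A : V →L[ℝ] V)).tsum_eq.symm
        _ = _ := by
            apply tsum_congr; intro k
            have := h1 (-(k:ℤ)-1) (Pu (e (n + k)))
            rw [sub_add_cancel] at this
            rw [← this]
    have hzu1 : zu (n+1) = A (zu n) - Pu (e n) := by
      rw [hAzu]
      have hsplit :
          ∑' k : ℕ, (A ^ (-(k:ℤ))) (Pu (e (n + k)))
            = (A ^ (-((0:ℕ):ℤ))) (Pu (e (n+(0:ℕ)))) +
              ∑' k : ℕ, (A ^ (-((k+1:ℕ):ℤ))) (Pu (e (n+((k+1:ℕ):ℤ)))) :=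
        Summable.tsum_eq_zero_add hSu'
      have hfirst : (A ^ (-((0:ℕ):ℤ))) (Pu (e (n+(0:ℕ)))) = Pu (e n) := by
        simp only [Nat.cast_zero, neg_zero, add_zero]
        rw [hzero]
      have hrest : ∑' k : ℕ, (A ^ (-((k+1:ℕ):ℤ))) (Pu (e (n+((k+1:ℕ):ℤ)))) = zu (n+1) := by
        apply tsum_congr; intro k
        have e1 : -((k+1:ℕ):ℤ) = -(k:ℤ)-1 := by push_cast; ring
        have e2 : n+((k+1:ℕ):ℤ) = (n+1)+(k:ℤ) := by push_cast; ring
        rw [e1, e2]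
      rw [hsplit, hfirst, hrest]
      abel
    have hse := hsum (e n)
    show zs (n+1) - zu (n+1) = A (zs n - zu n) + e n
    calc zs (n+1) - zu (n+1) = (Ps (e n) + A (zs n)) - (A (zu n) - Pu (e n)) := by
          rw [hzs1, hzu1]
      _ = (A (zs n) - A (zu n)) + (Ps (e n) + Pu (e n)) := by abel
      _ = A (zs n - zu n) + e n := by rw [map_sub A (zs n) (zu n), hse]
  -- the shadowing point
  set y : V := x 0 + z 0 with hy
  have horb : ∀ n : ℤ, (A ^ n) y = x n + z n := by
    intro n
    induction n using Int.induction_on with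
    | zero => rw [hzero]
    | succ i ih =>
      rw [h1, ih, map_add]
      have h3 : A (x (i:ℤ)) = e i + x ((i:ℤ)+1) := by
        simp only [he]; rw [sub_add_cancel]
      have h4 : A (z (i:ℤ)) = z ((i:ℤ)+1) - e i := by
        rw [hrec, add_sub_cancel_right]
      rw [h3, h4]; abel
    | pred i ih =>
      have hstep : A (x (-(i:ℤ)-1) + z (-(i:ℤ)-1)) = x (-(i:ℤ)) + z (-(i:ℤ)) := by
        have h4 : z (-(i:ℤ)-1+1) = A (z (-(i:ℤ)-1)) + e (-(i:ℤ)-1) := hrec _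
        have h3 : A (x (-(i:ℤ)-1)) = e (-(i:ℤ)-1) + x (-(i:ℤ)-1+1) := by
          simp only [he]; rw [sub_add_cancel]
        have h5 : -(i:ℤ)-1+1 = -(i:ℤ) := by ring
        rw [h5] at h3 h4
        rw [map_add, h3, h4]; abel
      rw [h2, ih, ← hstep, A.symm_apply_apply]
  have hyb : ∀ n : ℤ, ‖(A ^ n) y - x n‖ ≤ C := by
    intro n
    rw [horb n, add_sub_cancel_left]
    exact hzb n
  refine ⟨y, hyb, ?_⟩
  -- uniqueness
  intro y1 hy1
  have hw : ∀ n : ℤ, ‖(A ^ n) (y1 - y)‖ ≤ 2 * C := by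
    intro n
    calc ‖(A ^ n) (y1 - y)‖ = ‖((A ^ n) y1 - x n) - ((A ^ n) y - x n)‖ := by
          rw [map_sub]; congr 1; abel
      _ ≤ ‖(A ^ n) y1 - x n‖ + ‖(A ^ n) y - x n‖ := norm_sub_le _ _
      _ ≤ C + C := add_le_add (hy1 n) (hyb n)
      _ = 2 * C := by ring
  have hlim : Tendsto (fun m : ℕ => a ^ m * (2*C)) atTop (nhds 0) := by
    simpa using (tendsto_pow_atTop_nhds_zero_of_lt_one haa ha1).mul_const (2*C)
  have hPsw : ‖Ps (y1 - y)‖ ≤ 0 := by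
    refine ge_of_tendsto hlim (Filter.Eventually.of_forall ?_)
    intro m
    have hww : (A ^ (m:ℤ)) ((A ^ (-(m:ℤ))) (y1-y)) = y1 - y := by
      rw [← happ]
      simp only [add_neg_cancel]
      rw [hzero]
    calc ‖Ps (y1-y)‖ = ‖Ps ((A ^ (m:ℤ)) ((A ^ (-(m:ℤ))) (y1-y)))‖ := by rw [hww]
      _ = ‖(A ^ (m:ℤ)) (Ps ((A ^ (-(m:ℤ))) (y1-y)))‖ := by rw [hsc]
      _ ≤ a ^ m * ‖Ps ((A ^ (-(m:ℤ))) (y1-y))‖ := hsn m _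
      _ ≤ a ^ m * ‖(A ^ (-(m:ℤ))) (y1-y)‖ :=
          mul_le_mul_of_nonneg_left (hPsle _) (pow_nonneg haa m)
      _ ≤ a ^ m * (2*C) := mul_le_mul_of_nonneg_left (hw _) (pow_nonneg haa m)
  have hPuw : ‖Pu (y1 - y)‖ ≤ 0 := by
    refine ge_of_tendsto hlim (Filter.Eventually.of_forall ?_)
    intro m
    have hww : (A ^ (-(m:ℤ))) ((A ^ ((m:ℤ))) (y1-y)) = y1 - y := by
      rw [← happ]
      simp only [neg_add_cancel]
      rw [hzero]
    calc ‖Pu (y1-y)‖ = ‖Pu ((A ^ (-(m:ℤ))) ((A ^ ((m:ℤ))) (y1-y)))‖ := by rw [hww]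
      _ = ‖(A ^ (-(m:ℤ))) (Pu ((A ^ ((m:ℤ))) (y1-y)))‖ := by rw [huc]
      _ ≤ a ^ m * ‖Pu ((A ^ ((m:ℤ))) (y1-y))‖ := hun m _
      _ ≤ a ^ m * ‖(A ^ ((m:ℤ))) (y1-y)‖ :=
          mul_le_mul_of_nonneg_left (hPule _) (pow_nonneg haa m)
      _ ≤ a ^ m * (2*C) := mul_le_mul_of_nonneg_left (hw _) (pow_nonneg haa m)
  have : ‖y1 - y‖ ≤ 0 := by
    rw [hnorm (y1 - y)]
    exact max_le hPsw hPuw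
  have := norm_le_zero_iff.mp this
  exact sub_eq_zero.mp this
end

section
/- If (x_n)_{n∈ℤ} is an r-pseudo orbit for A, then for every n ≥ 0 and every m ∈ ℤ one has ‖A^n x^s_m − x^s_{n+m}‖_s ≤ r/(1−a), where x^s denotes the E^s-component of x. -/
open MeasureTheory Filter Topology Set
open scoped ENNReal NNReal

open Samva

/-- For an `r`-pseudo orbit `(x_n)`, the stable components satisfy
`‖Aⁿ x_mˢ − x_{n+m}ˢ‖ ≤ r/(1−a)` for all `n ≥ 0` and `m ∈ ℤ`. -/
theorem stable_component_shadowing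
    {V : Type*} [NormedAddCommGroup V] [NormedSpace ℝ V] [FiniteDimensional ℝ V]
    (A : V ≃L[ℝ] V) (Ps Pu : V →L[ℝ] V) (a : ℝ) (ha0 : 0 < a) (ha1 : a < 1)
    (hPs : ∀ x : V, Ps (Ps x) = Ps x) (hPu : ∀ x : V, Pu (Pu x) = Pu x)
    (hsum : ∀ x : V, Ps x + Pu x = x)
    (hAPs : ∀ x : V, A (Ps x) = Ps (A x)) (hAPu : ∀ x : V, A (Pu x) = Pu (A x))
    (hnorm : ∀ x : V, ‖x‖ = max ‖Ps x‖ ‖Pu x‖)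
    (hcontr : ∀ x : V, ‖A (Ps x)‖ ≤ a * ‖Ps x‖)
    (hexpd : ∀ x : V, ‖A.symm (Pu x)‖ ≤ a * ‖Pu x‖)
    (r : ℝ) (hr : 0 < r) (x : ℤ → V) (hx : ∀ n : ℤ, ‖A (x n) - x (n + 1)‖ ≤ r) :
    ∀ (n : ℕ) (m : ℤ), ‖(A ^ (n : ℤ)) (Ps (x m)) - Ps (x ((n : ℤ) + m))‖ ≤ r / (1 - a) := by
  have h1a : 0 < 1 - a := by linarith
  have hPsle : ∀ w : V, ‖Ps w‖ ≤ ‖w‖ := fun w => (hnorm w).symm ▸ le_max_left _ _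
  have hcomm : ∀ (k : ℕ) (y : V), Ps ((A ^ k) y) = (A ^ k) (Ps y) := by
    intro k
    induction k with
    | zero => intro y; rfl
    | succ k ih =>
      intro y
      rw [pow_succ']
      show Ps (A ((A ^ k) y)) = A ((A ^ k) (Ps y))
      rw [← ih, hAPs]
  intro n
  induction n with
  | zero =>
    intro m
    simp only [Nat.cast_zero, zpow_zero, zero_add]
    show ‖Ps (x m) - Ps (x m)‖ ≤ r / (1 - a)
    rw [sub_self, norm_zero]
    positivity
  | succ n ih =>
    intro m
    have hcast : ((n + 1 : ℕ) : ℤ) = (n : ℤ) + 1 := by push_cast; ring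
    set v : V := (A ^ (n : ℤ)) (Ps (x m)) - Ps (x ((n : ℤ) + m)) with hv
    have hPsv : Ps v = v := by
      rw [hv, map_sub, zpow_natCast, hcomm, hPs, hPs]
    have hAv : ‖A v‖ ≤ a * ‖v‖ := by
      have := hcontr v; rwa [hPsv] at this
    have hstep : ‖A (Ps (x ((n : ℤ) + m))) - Ps (x ((n : ℤ) + m + 1))‖ ≤ r := by
      have : A (Ps (x ((n : ℤ) + m))) - Ps (x ((n : ℤ) + m + 1))
          = Ps (A (x ((n : ℤ) + m)) - x ((n : ℤ) + m + 1)) := by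
        rw [hAPs, map_sub]
      rw [this]
      exact le_trans (hPsle _) (hx _)
    have hsucc : ((A ^ ((n + 1 : ℕ) : ℤ)) (Ps (x m)) : V) = A ((A ^ (n : ℤ)) (Ps (x m))) := by
      rw [zpow_natCast, zpow_natCast, pow_succ']
      rfl
    have hidx : ((n + 1 : ℕ) : ℤ) + m = (n : ℤ) + m + 1 := by push_cast; ring
    have hdecomp : (A ^ ((n + 1 : ℕ) : ℤ)) (Ps (x m)) - Ps (x (((n + 1 : ℕ) : ℤ) + m))
        = A v + (A (Ps (x ((n : ℤ) + m))) - Ps (x ((n : ℤ) + m + 1))) := by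
      rw [hsucc, hidx, hv, map_sub]
      abel
    rw [hdecomp]
    have h1 : ‖A v + (A (Ps (x ((n : ℤ) + m))) - Ps (x ((n : ℤ) + m + 1)))‖
        ≤ ‖A v‖ + ‖A (Ps (x ((n : ℤ) + m))) - Ps (x ((n : ℤ) + m + 1))‖ := norm_add_le _ _
    have hvb : ‖v‖ ≤ r / (1 - a) := ih m
    have : a * ‖v‖ ≤ a * (r / (1 - a)) := by
      exact mul_le_mul_of_nonneg_left hvb (le_of_lt ha0)
    have hfinal : a * (r / (1 - a)) + r = r / (1 - a) := by
      field_simp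
      ring
    linarith
end
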